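/- Let G be a finite simple graph on vertex set {x_{11}, …, x_{n1}} and for each i = 1, …, n let G_i be a connected chordal graph with at least two vertices such that x_{i1} ∈ V(G_i) is a neighbor of a simplicial vertex of G_i. Then the attachment graph G(G_1, …, G_n) is vertex decomposable. -/

import Mathlib

open SimpleGraph


variable {V : Type*} [DecidableEq V]

/-- `S` is an independent set of the induced subgraph of `G` on the vertex set `A`. -/
def IsIndepIn (G : SimpleGraph V) (A S : Finset V) : Prop :=
  S ⊆ A ∧ ∀ u ∈ S, ∀ v ∈ S, ¬G.Adj u v

/-- `S` is a maximal independent set of the induced subgraph of `G` on the vertex set `A`. -/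
def IsMaxIndepIn (G : SimpleGraph V) (A S : Finset V) : Prop :=
  IsIndepIn G A S ∧ ∀ T, IsIndepIn G A T → S ⊆ T → S = T

/-- The induced subgraph of `G` on `A` is unmixed: all maximal independent sets
have the same cardinality. -/
def UnmixedOn (G : SimpleGraph V) (A : Finset V) : Prop :=
  ∀ S T, IsMaxIndepIn G A S → IsMaxIndepIn G A T → S.card = T.card

open scoped Classical in
/-- The vertex set `A \ N_G[x]`. -/
noncomputable def delClosedNbhd (G : SimpleGraph V) (A : Finset V) (x : V) : Finset V :=
  A.filter fun y => y ≠ x ∧ ¬G.Adj x y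

/-- The induced subgraph of `G` on `A` is vertex decomposable. -/
inductive VertexDecomposableOn (G : SimpleGraph V) : Finset V → Prop
  | edgeless (A : Finset V) (h : ∀ u ∈ A, ∀ v ∈ A, ¬G.Adj u v) : VertexDecomposableOn G A
  | shed (A : Finset V) (x : V) (hx : x ∈ A)
      (hlink : VertexDecomposableOn G (delClosedNbhd G A x))
      (hdel : VertexDecomposableOn G (A.erase x))
      (hexch : ∀ S, IsIndepIn G (delClosedNbhd G A x) S →
        ∃ y ∈ A, G.Adj x y ∧ IsIndepIn G (A.erase x) (insert y S)) :
      VertexDecomposableOn G A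

/-- `x` is a shedding vertex of the induced subgraph of `G` on `A`. -/
def IsSheddingVertexOn (G : SimpleGraph V) (A : Finset V) (x : V) : Prop :=
  x ∈ A ∧
  VertexDecomposableOn G (delClosedNbhd G A x) ∧
  VertexDecomposableOn G (A.erase x) ∧
  ∀ S, IsIndepIn G (delClosedNbhd G A x) S →
    ∃ y ∈ A, G.Adj x y ∧ IsIndepIn G (A.erase x) (insert y S)

/-- The independence complex of the induced subgraph of `G` on `A` is shellable:
there is an ordering `F 0, F 1, …` of its facets (the maximal independent sets) such
that for every `i`, every face of the subcomplex `(⋃ j < i, ⟨F j⟩) ∩ ⟨F i⟩` is contained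
in a face of that subcomplex of cardinality `(F i).card - 1` (i.e. the subcomplex is
pure of dimension `dim (F i) - 1`). -/
def ShellableOn (G : SimpleGraph V) (A : Finset V) : Prop :=
  ∃ (t : ℕ) (F : Fin t → Finset V),
    Function.Injective F ∧
    (∀ S, IsMaxIndepIn G A S ↔ ∃ i, F i = S) ∧
    ∀ i : Fin t, ∀ S : Finset V, S ⊆ F i → (∃ j, j < i ∧ S ⊆ F j) →
      ∃ S' : Finset V, S ⊆ S' ∧ S' ⊆ F i ∧ (∃ j, j < i ∧ S' ⊆ F j) ∧
        S'.card = (F i).card - 1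

/-- A graph is chordal if every cycle of length at least four has a chord, i.e. an
edge of the graph joining two vertices of the cycle that is not an edge of the cycle. -/
def IsChordal (G : SimpleGraph V) : Prop :=
  ∀ (x : V) (w : G.Walk x x), w.IsCycle → 4 ≤ w.length →
    ∃ u v, u ∈ w.support ∧ v ∈ w.support ∧ G.Adj u v ∧ s(u, v) ∉ w.edges

/-- The induced subgraph of `G` on `A` is a cycle graph on `m` vertices. -/
def IsCycleGraphOn (G : SimpleGraph V) (A : Finset V) (m : ℕ) : Prop :=
  (∀ u v, G.Adj u v → u ∈ A ∧ v ∈ A) ∧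
  Nonempty (G.induce (A : Set V) ≃g SimpleGraph.cycleGraph m)

/-- The independence number of the induced subgraph of `G` on `A`. -/
noncomputable def indepNumOn (G : SimpleGraph V) (A : Finset V) : ℕ :=
  sSup {k | ∃ S, IsIndepIn G A S ∧ S.card = k}

variable {H : SimpleGraph V}

set_option linter.unusedSectionVars false
set_option maxHeartbeats 1000000

/-- Reachability within a vertex set `W`. -/
def ReachIn (H : SimpleGraph V) (W : Finset V) (a b : V) : Prop :=
  ∃ w : H.Walk a b, ∀ y ∈ w.support, y ∈ W

namespace ReachIn

lemma refl {W : Finset V} {a : V} (ha : a ∈ W) : ReachIn H W a a :=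
  ⟨.nil, by simpa using ha⟩

lemma symm {W : Finset V} {a b : V} (h : ReachIn H W a b) : ReachIn H W b a := by
  obtain ⟨w, hw⟩ := h
  exact ⟨w.reverse, fun y hy => hw y (by simpa [SimpleGraph.Walk.support_reverse] using hy)⟩

lemma trans {W : Finset V} {a b c : V} (h : ReachIn H W a b) (h' : ReachIn H W b c) :
    ReachIn H W a c := by
  obtain ⟨w, hw⟩ := h
  obtain ⟨w', hw'⟩ := h'
  refine ⟨w.append w', fun y hy => ?_⟩
  rcases (SimpleGraph.Walk.mem_support_append_iff _ _).1 hy with h | h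
  · exact hw y h
  · exact hw' y h

lemma adj {W : Finset V} {a b : V} (h : H.Adj a b) (ha : a ∈ W) (hb : b ∈ W) :
    ReachIn H W a b :=
  ⟨.cons h .nil, by simp [ha, hb]⟩

lemma mem_left {W : Finset V} {a b : V} (h : ReachIn H W a b) : a ∈ W := by
  obtain ⟨w, hw⟩ := h; exact hw a w.start_mem_support

lemma mem_right {W : Finset V} {a b : V} (h : ReachIn H W a b) : b ∈ W := by
  obtain ⟨w, hw⟩ := h; exact hw b w.end_mem_support

lemma mono {W W' : Finset V} {a b : V} (hW : W ⊆ W') (h : ReachIn H W a b) :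
    ReachIn H W' a b := by
  obtain ⟨w, hw⟩ := h
  exact ⟨w, fun y hy => hW (hw y hy)⟩

/-- All vertices on a witnessing walk are reachable. -/
lemma of_mem_support {W : Finset V} {a b y : V} {w : H.Walk a b}
    (hw : ∀ z ∈ w.support, z ∈ W) (hy : y ∈ w.support) : ReachIn H W a y :=
  ⟨w.takeUntil y hy, fun z hz => hw z (SimpleGraph.Walk.support_takeUntil_subset _ hy hz)⟩

end ReachIn

/-- A chord of a path gives a shorter walk with the same endpoints within the same support. -/
lemma shortcut : ∀ {u v : V} (w : H.Walk u v) (p q : V), p ∈ w.support → q ∈ w.support →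
    H.Adj p q → s(p, q) ∉ w.edges →
    ∃ w' : H.Walk u v, (∀ y ∈ w'.support, y ∈ w.support) ∧ w'.length < w.length := by
  intro u v w
  induction w with
  | nil =>
    intro p q hp hq hadj _
    simp only [SimpleGraph.Walk.support_nil, List.mem_singleton] at hp hq
    exact absurd (hp ▸ hq ▸ hadj) (H.irrefl)
  | @cons u u' v h w₁ ih =>
    intro p q hp hq hadj hne
    have key : ∀ q : V, q ∈ (SimpleGraph.Walk.cons h w₁).support → H.Adj u q →
        s(u, q) ∉ (SimpleGraph.Walk.cons h w₁).edges →
        ∃ w' : H.Walk u v, (∀ y ∈ w'.support, y ∈ (SimpleGraph.Walk.cons h w₁).support) ∧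
          w'.length < (SimpleGraph.Walk.cons h w₁).length := by
      intro q hq hadj hne
      have hqu : q ≠ u := fun hh => H.irrefl (hh ▸ hadj)
      have hq₁ : q ∈ w₁.support := by
        rcases List.mem_cons.1 (by simpa [SimpleGraph.Walk.support_cons] using hq) with h' | h'
        · exact absurd h' hqu
        · exact h'
      have hqu' : q ≠ u' := by
        rintro rfl
        exact hne (by simp [SimpleGraph.Walk.edges_cons])
      refine ⟨SimpleGraph.Walk.cons hadj (w₁.dropUntil q hq₁), ?_, ?_⟩
      · intro y hy
        rcases List.mem_cons.1 (by simpa [SimpleGraph.Walk.support_cons] using hy) with rfl | hy'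
        · simp [SimpleGraph.Walk.support_cons]
        · simp [SimpleGraph.Walk.support_cons,
            SimpleGraph.Walk.support_dropUntil_subset w₁ hq₁ hy']
      · have hsplit := congrArg SimpleGraph.Walk.length (w₁.take_spec hq₁)
        rw [SimpleGraph.Walk.length_append] at hsplit
        have hpos : 0 < (w₁.takeUntil q hq₁).length := by
          rcases Nat.eq_zero_or_pos (w₁.takeUntil q hq₁).length with h0 | h'
          · exact absurd (SimpleGraph.Walk.eq_of_length_eq_zero h0) (Ne.symm hqu')
          · exact h'
        simp only [SimpleGraph.Walk.length_cons]
        omega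
    by_cases hpu : p = u
    · subst hpu; exact key q hq hadj hne
    by_cases hqu : q = u
    · subst hqu; exact key p hp hadj.symm (by rwa [Sym2.eq_swap])
    · have hp₁ : p ∈ w₁.support := by simpa [SimpleGraph.Walk.support_cons, hpu] using hp
      have hq₁ : q ∈ w₁.support := by simpa [SimpleGraph.Walk.support_cons, hqu] using hq
      obtain ⟨w', hsub, hlt⟩ := ih p q hp₁ hq₁ hadj
        (fun hc => hne (by simp [SimpleGraph.Walk.edges_cons, hc]))
      refine ⟨SimpleGraph.Walk.cons h w', ?_, by simpa using Nat.succ_lt_succ hlt⟩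
      intro y hy
      rcases List.mem_cons.1 (by simpa [SimpleGraph.Walk.support_cons] using hy) with rfl | hy'
      · simp [SimpleGraph.Walk.support_cons]
      · simp [SimpleGraph.Walk.support_cons, hsub y hy']

/-- Existence of a minimum-length path between two `W`-connected vertices. -/
lemma exists_min_path {W : Finset V} {u v : V}
    (h : ∃ w : H.Walk u v, ∀ y ∈ w.support, y ∈ W) :
    ∃ w : H.Walk u v, (∀ y ∈ w.support, y ∈ W) ∧ w.IsPath ∧
      ∀ w' : H.Walk u v, (∀ y ∈ w'.support, y ∈ W) → w.length ≤ w'.length := by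
  classical
  set T : Set ℕ := {k | ∃ w : H.Walk u v, (∀ y ∈ w.support, y ∈ W) ∧ w.length = k} with hT
  have hTne : T.Nonempty := by obtain ⟨w, hw⟩ := h; exact ⟨w.length, w, hw, rfl⟩
  obtain ⟨w, hw, hlen⟩ := Nat.sInf_mem hTne
  have hmin : ∀ w' : H.Walk u v, (∀ y ∈ w'.support, y ∈ W) → sInf T ≤ w'.length :=
    fun w' hw' => Nat.sInf_le ⟨w', hw', rfl⟩
  refine ⟨w.bypass, fun y hy => hw y (w.support_bypass_subset hy), w.bypass_isPath, ?_⟩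
  intro w' hw'
  calc w.bypass.length ≤ w.length := w.length_bypass_le
    _ = sInf T := hlen
    _ ≤ w'.length := hmin w' hw'
/-- Chordality of the induced subgraph on `A`. -/
def ChordalOn (H : SimpleGraph V) (A : Finset V) : Prop :=
  ∀ (x : V) (w : H.Walk x x), w.IsCycle → 4 ≤ w.length → (∀ y ∈ w.support, y ∈ A) →
    ∃ u v, u ∈ w.support ∧ v ∈ w.support ∧ H.Adj u v ∧ s(u, v) ∉ w.edges

lemma ChordalOn.mono {A A' : Finset V} (h : A ⊆ A') (hc : ChordalOn H A') : ChordalOn H A :=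
  fun x w hw hl hs => hc x w hw hl (fun y hy => h (hs y hy))

/-- `z` is a simplicial vertex of the induced subgraph on `A`. -/
def SimplicialOn (H : SimpleGraph V) (A : Finset V) (z : V) : Prop :=
  z ∈ A ∧ ∀ u ∈ A, ∀ v ∈ A, H.Adj z u → H.Adj z v → u ≠ v → H.Adj u v

theorem dirac_pair (H : SimpleGraph V) : ∀ (N : ℕ) (A : Finset V), A.card ≤ N → ChordalOn H A →
    ∀ a ∈ A, ∀ b ∈ A, a ≠ b → ¬H.Adj a b →
      ∃ z₁ z₂, SimplicialOn H A z₁ ∧ SimplicialOn H A z₂ ∧ z₁ ≠ z₂ ∧ ¬H.Adj z₁ z₂ := by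
  intro N
  induction N with
  | zero =>
    intro A hA _ a ha
    rw [Nat.le_zero, Finset.card_eq_zero] at hA
    simp [hA] at ha
  | succ N ih =>
    intro A hA hc a ha b hb hab hnadj
    classical
    -- minimal separator
    set Sep : Set (Finset V) := {S | S ⊆ A ∧ a ∉ S ∧ b ∉ S ∧ ¬ReachIn H (A \ S) a b} with hSepdef
    have hSep0 : (A \ {a, b} : Finset V) ∈ Sep := by
      refine ⟨Finset.sdiff_subset, by simp [ha], by simp [hb], ?_⟩
      rintro ⟨w, hw⟩
      obtain ⟨c, hadj, w', rfl⟩ := SimpleGraph.Walk.exists_eq_cons_of_ne hab w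
      have hcsup : c ∈ (SimpleGraph.Walk.cons hadj w').support := by
        simp [SimpleGraph.Walk.support_cons, SimpleGraph.Walk.start_mem_support]
      have := hw c hcsup
      have hcab : c = a ∨ c = b := by
        simp only [Finset.mem_sdiff, Finset.mem_insert, Finset.mem_singleton] at this
        tauto
      rcases hcab with rfl | rfl
      · exact H.irrefl hadj
      · exact hnadj hadj
    have hTne : {m | ∃ S ∈ Sep, S.card = m}.Nonempty := ⟨_, _, hSep0, rfl⟩
    obtain ⟨S, hSSep, hScard⟩ := Nat.sInf_mem hTne
    obtain ⟨hSsub, haS, hbS, hsep⟩ := hSSep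
    have hmin : ∀ S' ∈ Sep, S.card ≤ S'.card := by
      intro S' hS'
      rw [hScard]
      exact Nat.sInf_le ⟨S', hS', rfl⟩
    have haAS : a ∈ A \ S := Finset.mem_sdiff.2 ⟨ha, haS⟩
    have hbAS : b ∈ A \ S := Finset.mem_sdiff.2 ⟨hb, hbS⟩
    -- neighbors of separator vertices in both components
    have hnbr : ∀ s ∈ S, ∀ c : V, (c = a ∨ c = b) →
        ∃ p, ReachIn H (A \ S) c p ∧ H.Adj s p := by
      intro s hs c hcab
      have hsa : s ≠ a := fun h => haS (h ▸ hs)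
      have hsb : s ≠ b := fun h => hbS (h ▸ hs)
      have hsc : s ≠ c := by rcases hcab with rfl | rfl <;> assumption
      have herase : ¬ (S.erase s ∈ Sep) := by
        intro hmem
        have := hmin _ hmem
        have hlt : (S.erase s).card < S.card := Finset.card_erase_lt_of_mem hs
        omega
      have hreach : ReachIn H (A \ S.erase s) a b := by
        by_contra hcon
        exact herase ⟨(Finset.erase_subset _ _).trans hSsub,
          fun h => haS (Finset.mem_of_mem_erase h),
          fun h => hbS (Finset.mem_of_mem_erase h), hcon⟩
      obtain ⟨d, hdprop⟩ : ∃ d, ((c = a ∧ d = b) ∨ (c = b ∧ d = a)) := by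
        rcases hcab with h | h
        · exact ⟨b, Or.inl ⟨h, rfl⟩⟩
        · exact ⟨a, Or.inr ⟨h, rfl⟩⟩
      have hreach' : ReachIn H (A \ S.erase s) c d := by
        rcases hdprop with ⟨h1, h2⟩ | ⟨h1, h2⟩
        · rw [h1, h2]; exact hreach
        · rw [h1, h2]; exact hreach.symm
      obtain ⟨w0, hw0⟩ := hreach'
      -- pass to a path
      set w := w0.bypass with hwdef
      have hwsupp : ∀ y ∈ w.support, y ∈ A \ S.erase s :=
        fun y hy => hw0 y (w0.support_bypass_subset hy)
      have hwpath : w.IsPath := w0.bypass_isPath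
      have hsmem : s ∈ w.support := by
        by_contra hsmem
        apply hsep
        have : ReachIn H (A \ S) c d := by
          refine ⟨w, fun y hy => ?_⟩
          have hy' := hwsupp y hy
          rw [Finset.mem_sdiff] at hy' ⊢
          refine ⟨hy'.1, fun hyS => ?_⟩
          have : y ≠ s := fun h => hsmem (h ▸ hy)
          exact hy'.2 (Finset.mem_erase.2 ⟨this, hyS⟩)
        rcases hdprop with ⟨h1, h2⟩ | ⟨h1, h2⟩
        · rwa [h1, h2] at this
        · rw [h1, h2] at this; exact this.symm
      -- the predecessor of `s` on the path works
      set t1 := w.takeUntil s hsmem with ht1def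
      have ht1supp : ∀ y ∈ t1.support, y ∈ A \ S.erase s :=
        fun y hy => hwsupp y (SimpleGraph.Walk.support_takeUntil_subset w hsmem hy)
      have hcount : t1.support.count s = 1 := w.count_support_takeUntil_eq_one hsmem
      obtain ⟨p, hadj, r, hr⟩ := SimpleGraph.Walk.exists_eq_cons_of_ne hsc t1.reverse
      have h2 : t1.support.reverse = s :: r.support := by
        have := congrArg SimpleGraph.Walk.support hr
        rwa [SimpleGraph.Walk.support_reverse, SimpleGraph.Walk.support_cons] at this
      have hsnr : s ∉ r.support := by
        intro hmem
        have h1 : t1.support.reverse.count s = 1 := by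
          rw [List.count_reverse]; exact hcount
        rw [h2, List.count_cons_self] at h1
        have h3 : 0 < r.support.count s := List.count_pos_iff.mpr hmem
        omega
      refine ⟨p, ReachIn.symm ⟨r, fun y hy => ?_⟩, hadj⟩
      have hyne : y ≠ s := fun h => hsnr (h ▸ hy)
      have hyt : y ∈ t1.support := by
        rw [← List.mem_reverse, h2]
        exact List.mem_cons_of_mem _ hy
      have hy' := ht1supp y hyt
      rw [Finset.mem_sdiff] at hy' ⊢
      exact ⟨hy'.1, fun hyS => hy'.2 (Finset.mem_erase.2 ⟨hyne, hyS⟩)⟩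
    -- components
    set Ca := (A \ S).filter (fun y => ReachIn H (A \ S) a y) with hCadef
    set Cb := (A \ S).filter (fun y => ReachIn H (A \ S) b y) with hCbdef
    have hmemCa : ∀ y, y ∈ Ca ↔ ReachIn H (A \ S) a y := by
      intro y
      simp only [hCadef, Finset.mem_filter]
      exact ⟨fun h => h.2, fun h => ⟨h.mem_right, h⟩⟩
    have hmemCb : ∀ y, y ∈ Cb ↔ ReachIn H (A \ S) b y := by
      intro y
      simp only [hCbdef, Finset.mem_filter]
      exact ⟨fun h => h.2, fun h => ⟨h.mem_right, h⟩⟩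
    have haCa : a ∈ Ca := (hmemCa a).2 (ReachIn.refl haAS)
    have hbCb : b ∈ Cb := (hmemCb b).2 (ReachIn.refl hbAS)
    have hCaAS : ∀ y ∈ Ca, y ∈ A \ S := fun y hy => Finset.mem_of_mem_filter y hy
    have hCbAS : ∀ y ∈ Cb, y ∈ A \ S := fun y hy => Finset.mem_of_mem_filter y hy
    have hdisjC : ∀ y, y ∈ Ca → y ∈ Cb → False :=
      fun y h1 h2 => hsep (((hmemCa y).1 h1).trans ((hmemCb y).1 h2).symm)
    have hbCa : b ∉ Ca := fun h => hdisjC b h hbCb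
    have haCb : a ∉ Cb := fun h => hdisjC a haCa h
    -- the separator is a clique
    have hclique : ∀ u ∈ S, ∀ v ∈ S, u ≠ v → H.Adj u v := by
      intro u hu v hv huv
      by_contra hnadjuv
      obtain ⟨pu, hpuR, hpuAdj⟩ := hnbr u hu a (Or.inl rfl)
      obtain ⟨pv, hpvR, hpvAdj⟩ := hnbr v hv a (Or.inl rfl)
      obtain ⟨qu, hquR, hquAdj⟩ := hnbr u hu b (Or.inr rfl)
      obtain ⟨qv, hqvR, hqvAdj⟩ := hnbr v hv b (Or.inr rfl)
      have hpuCa : pu ∈ Ca := (hmemCa pu).2 hpuR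
      have hpvCa : pv ∈ Ca := (hmemCa pv).2 hpvR
      have hquCb : qu ∈ Cb := (hmemCb qu).2 hquR
      have hqvCb : qv ∈ Cb := (hmemCb qv).2 hqvR
      set W₁ := insert u (insert v Ca) with hW₁def
      set W₂ := insert v (insert u Cb) with hW₂def
      have hW1ex : ∃ w : H.Walk u v, ∀ y ∈ w.support, y ∈ W₁ := by
        obtain ⟨w0, hw0⟩ := hpuR.symm.trans hpvR
        refine ⟨SimpleGraph.Walk.cons hpuAdj (w0.concat hpvAdj.symm), fun y hy => ?_⟩
        rw [SimpleGraph.Walk.support_cons] at hy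
        rcases List.mem_cons.1 hy with rfl | hy
        · exact Finset.mem_insert_self _ _
        · rw [SimpleGraph.Walk.support_concat, List.mem_append] at hy
          rcases hy with hy | hy
          · have : y ∈ Ca := (hmemCa y).2 (hpuR.trans (ReachIn.of_mem_support hw0 hy))
            exact Finset.mem_insert_of_mem (Finset.mem_insert_of_mem this)
          · rw [List.mem_singleton] at hy
            exact hy ▸ Finset.mem_insert_of_mem (Finset.mem_insert_self _ _)
      have hW2ex : ∃ w : H.Walk v u, ∀ y ∈ w.support, y ∈ W₂ := by
        obtain ⟨w0, hw0⟩ := hqvR.symm.trans hquR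
        refine ⟨SimpleGraph.Walk.cons hqvAdj (w0.concat hquAdj.symm), fun y hy => ?_⟩
        rw [SimpleGraph.Walk.support_cons] at hy
        rcases List.mem_cons.1 hy with rfl | hy
        · exact Finset.mem_insert_self _ _
        · rw [SimpleGraph.Walk.support_concat, List.mem_append] at hy
          rcases hy with hy | hy
          · have : y ∈ Cb := (hmemCb y).2 (hqvR.trans (ReachIn.of_mem_support hw0 hy))
            exact Finset.mem_insert_of_mem (Finset.mem_insert_of_mem this)
          · rw [List.mem_singleton] at hy
            exact hy ▸ Finset.mem_insert_of_mem (Finset.mem_insert_self _ _)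
      obtain ⟨P₁, hP₁W, hP₁path, hP₁min⟩ := exists_min_path hW1ex
      obtain ⟨P₂, hP₂W, hP₂path, hP₂min⟩ := exists_min_path hW2ex
      have hlen₁ : 2 ≤ P₁.length := by
        by_contra hcon
        interval_cases h : P₁.length
        · exact huv (SimpleGraph.Walk.eq_of_length_eq_zero h)
        · exact hnadjuv (SimpleGraph.Walk.adj_of_length_eq_one h)
      have hlen₂ : 2 ≤ P₂.length := by
        by_contra hcon
        interval_cases h : P₂.length
        · exact huv (SimpleGraph.Walk.eq_of_length_eq_zero h).symm
        · exact hnadjuv (SimpleGraph.Walk.adj_of_length_eq_one h).symm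
      set cyc := P₁.append P₂ with hcycdef
      have hcyclen : 4 ≤ cyc.length := by
        rw [hcycdef, SimpleGraph.Walk.length_append]; omega
      have huS : u ∈ S := hu
      have huCa : u ∉ Ca := fun h => (Finset.mem_sdiff.1 (hCaAS u h)).2 hu
      have hvCa : v ∉ Ca := fun h => (Finset.mem_sdiff.1 (hCaAS v h)).2 hv
      have huCb : u ∉ Cb := fun h => (Finset.mem_sdiff.1 (hCbAS u h)).2 hu
      have hvCb : v ∉ Cb := fun h => (Finset.mem_sdiff.1 (hCbAS v h)).2 hv
      have hW₁A : ∀ y ∈ W₁, y ∈ A := by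
        intro y hy
        rcases Finset.mem_insert.1 hy with rfl | hy
        · exact hSsub hu
        rcases Finset.mem_insert.1 hy with rfl | hy
        · exact hSsub hv
        · exact (Finset.mem_sdiff.1 (hCaAS y hy)).1
      have hW₂A : ∀ y ∈ W₂, y ∈ A := by
        intro y hy
        rcases Finset.mem_insert.1 hy with rfl | hy
        · exact hSsub hv
        rcases Finset.mem_insert.1 hy with rfl | hy
        · exact hSsub hu
        · exact (Finset.mem_sdiff.1 (hCbAS y hy)).1
      have hsuppA : ∀ y ∈ cyc.support, y ∈ A := by
        intro y hy
        rcases (SimpleGraph.Walk.mem_support_append_iff _ _).1 hy with h | h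
        · exact hW₁A y (hP₁W y h)
        · exact hW₂A y (hP₂W y h)
      have hedgedisj : ∀ e ∈ P₁.edges, e ∉ P₂.edges := by
        intro e he1 he2
        induction e using Sym2.ind with
        | _ p q =>
        have hp1 : p ∈ P₁.support := P₁.fst_mem_support_of_mem_edges he1
        have hp2 : p ∈ P₂.support := P₂.fst_mem_support_of_mem_edges he2
        have hq1 : q ∈ P₁.support := P₁.snd_mem_support_of_mem_edges he1
        have hq2 : q ∈ P₂.support := P₂.snd_mem_support_of_mem_edges he2
        have hadjpq : H.Adj p q := P₁.edges_subset_edgeSet he1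
        have hpuv : p = u ∨ p = v := by
          have h1 := hP₁W p hp1; have h2 := hP₂W p hp2
          rcases Finset.mem_insert.1 h1 with rfl | h1
          · exact Or.inl rfl
          rcases Finset.mem_insert.1 h1 with rfl | h1
          · exact Or.inr rfl
          rcases Finset.mem_insert.1 h2 with rfl | h2
          · exact Or.inr rfl
          rcases Finset.mem_insert.1 h2 with rfl | h2
          · exact Or.inl rfl
          · exact absurd (hdisjC p h1 h2) (fun h => h)
        have hquv : q = u ∨ q = v := by
          have h1 := hP₁W q hq1; have h2 := hP₂W q hq2
          rcases Finset.mem_insert.1 h1 with rfl | h1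
          · exact Or.inl rfl
          rcases Finset.mem_insert.1 h1 with rfl | h1
          · exact Or.inr rfl
          rcases Finset.mem_insert.1 h2 with rfl | h2
          · exact Or.inr rfl
          rcases Finset.mem_insert.1 h2 with rfl | h2
          · exact Or.inl rfl
          · exact absurd (hdisjC q h1 h2) (fun h => h)
        rcases hpuv with rfl | rfl <;> rcases hquv with rfl | rfl
        · exact H.irrefl hadjpq
        · exact hnadjuv hadjpq
        · exact hnadjuv hadjpq.symm
        · exact H.irrefl hadjpq
      have hP₁nd : P₁.edges.Nodup := SimpleGraph.Walk.edges_nodup_of_support_nodup hP₁path.support_nodup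
      have hP₂nd : P₂.edges.Nodup := SimpleGraph.Walk.edges_nodup_of_support_nodup hP₂path.support_nodup
      have htrail : cyc.IsTrail := by
        constructor
        rw [hcycdef, SimpleGraph.Walk.edges_append]
        exact List.nodup_append.2 ⟨hP₁nd, hP₂nd, fun a ha b hb hab => hedgedisj a ha (hab ▸ hb)⟩
      have hunotail₁ : u ∉ P₁.support.tail := by
        have := hP₁path.support_nodup
        rw [P₁.support_eq_cons] at this
        exact (List.nodup_cons.1 this).1
      have hvnotail₂ : v ∉ P₂.support.tail := by
        have := hP₂path.support_nodup
        rw [P₂.support_eq_cons] at this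
        exact (List.nodup_cons.1 this).1
      have hcyccyc : cyc.IsCycle := by
        refine ⟨⟨htrail, ?_⟩, ?_⟩
        · intro hnil
          have := congrArg SimpleGraph.Walk.length hnil
          rw [SimpleGraph.Walk.length_nil] at this
          omega
        · have hs1 : cyc.support = P₁.support ++ P₂.support.tail :=
            SimpleGraph.Walk.support_append _ _
          have hs2 : cyc.support.tail = P₁.support.tail ++ P₂.support.tail := by
            rw [hs1, P₁.support_eq_cons]
            simp
          rw [hs2]
          refine List.nodup_append.2 ⟨?_, ?_, ?_⟩
          · exact (List.nodup_cons.1 (by rw [← P₁.support_eq_cons]; exact hP₁path.support_nodup)).2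
          · exact (List.nodup_cons.1 (by rw [← P₂.support_eq_cons]; exact hP₂path.support_nodup)).2
          · rintro y hy1 _ hy2 rfl
            have hyW1 : y ∈ W₁ := hP₁W y (List.mem_of_mem_tail hy1)
            have hyW2 : y ∈ W₂ := hP₂W y (List.mem_of_mem_tail hy2)
            have hyu : y ≠ u := fun h => hunotail₁ (h ▸ hy1)
            have hyv : y ≠ v := fun h => hvnotail₂ (h ▸ hy2)
            rcases Finset.mem_insert.1 hyW1 with rfl | h1
            · exact hyu rfl
            rcases Finset.mem_insert.1 h1 with rfl | h1
            · exact hyv rfl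
            rcases Finset.mem_insert.1 hyW2 with rfl | h2
            · exact hyv rfl
            rcases Finset.mem_insert.1 h2 with rfl | h2
            · exact hyu rfl
            · exact hdisjC y h1 h2
      obtain ⟨p, q, hps, hqs, hpq, hpqe⟩ := hc u cyc hcyccyc hcyclen hsuppA
      have hmem1 : ∀ y, (y = u ∨ y = v ∨ y ∈ Ca) → y ∈ cyc.support → y ∈ P₁.support := by
        intro y hy hys
        rcases hy with rfl | rfl | hy
        · exact P₁.start_mem_support
        · exact P₁.end_mem_support
        · rcases (SimpleGraph.Walk.mem_support_append_iff _ _).1 hys with h | h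
          · exact h
          · exfalso
            have h2 := hP₂W y h
            rcases Finset.mem_insert.1 h2 with rfl | h2
            · exact hvCa hy
            rcases Finset.mem_insert.1 h2 with rfl | h2
            · exact huCa hy
            · exact hdisjC y hy h2
      have hmem2 : ∀ y, (y = u ∨ y = v ∨ y ∈ Cb) → y ∈ cyc.support → y ∈ P₂.support := by
        intro y hy hys
        rcases hy with rfl | rfl | hy
        · exact P₂.end_mem_support
        · exact P₂.start_mem_support
        · rcases (SimpleGraph.Walk.mem_support_append_iff _ _).1 hys with h | h
          · exfalso
            have h2 := hP₁W y h
            rcases Finset.mem_insert.1 h2 with rfl | h2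
            · exact huCb hy
            rcases Finset.mem_insert.1 h2 with rfl | h2
            · exact hvCb hy
            · exact hdisjC y h2 hy
          · exact h
      have hshort1 : ¬ ((p = u ∨ p = v ∨ p ∈ Ca) ∧ (q = u ∨ q = v ∨ q ∈ Ca)) := by
        rintro ⟨h1, h2⟩
        have hne1 : s(p, q) ∉ P₁.edges := fun h =>
          hpqe (by rw [hcycdef, SimpleGraph.Walk.edges_append]; exact List.mem_append_left _ h)
        obtain ⟨w', hw's, hw'l⟩ := shortcut P₁ p q (hmem1 p h1 hps) (hmem1 q h2 hqs) hpq hne1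
        have := hP₁min w' (fun y hy => hP₁W y (hw's y hy))
        omega
      have hshort2 : ¬ ((p = u ∨ p = v ∨ p ∈ Cb) ∧ (q = u ∨ q = v ∨ q ∈ Cb)) := by
        rintro ⟨h1, h2⟩
        have hne2 : s(p, q) ∉ P₂.edges := fun h =>
          hpqe (by rw [hcycdef, SimpleGraph.Walk.edges_append]; exact List.mem_append_right _ h)
        obtain ⟨w', hw's, hw'l⟩ := shortcut P₂ p q (hmem2 p h1 hps) (hmem2 q h2 hqs) hpq hne2
        have := hP₂min w' (fun y hy => hP₂W y (hw's y hy))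
        omega
      have hploc : (p = u ∨ p = v) ∨ p ∈ Ca ∨ p ∈ Cb := by
        rcases (SimpleGraph.Walk.mem_support_append_iff _ _).1 hps with h | h
        · have := hP₁W p h
          rcases Finset.mem_insert.1 this with rfl | h1
          · exact Or.inl (Or.inl rfl)
          rcases Finset.mem_insert.1 h1 with rfl | h1
          · exact Or.inl (Or.inr rfl)
          · exact Or.inr (Or.inl h1)
        · have := hP₂W p h
          rcases Finset.mem_insert.1 this with rfl | h1
          · exact Or.inl (Or.inr rfl)
          rcases Finset.mem_insert.1 h1 with rfl | h1
          · exact Or.inl (Or.inl rfl)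
          · exact Or.inr (Or.inr h1)
      have hqloc : (q = u ∨ q = v) ∨ q ∈ Ca ∨ q ∈ Cb := by
        rcases (SimpleGraph.Walk.mem_support_append_iff _ _).1 hqs with h | h
        · have := hP₁W q h
          rcases Finset.mem_insert.1 this with rfl | h1
          · exact Or.inl (Or.inl rfl)
          rcases Finset.mem_insert.1 h1 with rfl | h1
          · exact Or.inl (Or.inr rfl)
          · exact Or.inr (Or.inl h1)
        · have := hP₂W q h
          rcases Finset.mem_insert.1 this with rfl | h1
          · exact Or.inl (Or.inr rfl)
          rcases Finset.mem_insert.1 h1 with rfl | h1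
          · exact Or.inl (Or.inl rfl)
          · exact Or.inr (Or.inr h1)
      have hsepcontra : ∀ p' q', p' ∈ Ca → q' ∈ Cb → H.Adj p' q' → False := by
        intro p' q' hp' hq' hadj'
        exact hsep ((((hmemCa p').1 hp').trans
          (ReachIn.adj hadj' (hCaAS p' hp') (hCbAS q' hq'))).trans ((hmemCb q').1 hq').symm)
      rcases hploc with hp | hp | hp
      · rcases hqloc with hq | hq | hq
        · exact hshort1 ⟨hp.imp_right Or.inl, hq.imp_right Or.inl⟩
        · exact hshort1 ⟨hp.imp_right Or.inl, Or.inr (Or.inr hq)⟩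
        · exact hshort2 ⟨hp.imp_right Or.inl, Or.inr (Or.inr hq)⟩
      · rcases hqloc with hq | hq | hq
        · exact hshort1 ⟨Or.inr (Or.inr hp), hq.imp_right Or.inl⟩
        · exact hshort1 ⟨Or.inr (Or.inr hp), Or.inr (Or.inr hq)⟩
        · exact hsepcontra p q hp hq hpq
      · rcases hqloc with hq | hq | hq
        · exact hshort2 ⟨Or.inr (Or.inr hp), hq.imp_right Or.inl⟩
        · exact hsepcontra q p hq hp hpq.symm
        · exact hshort2 ⟨Or.inr (Or.inr hp), Or.inr (Or.inr hq)⟩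
    -- find a simplicial vertex in each component
    have getZ : ∀ c : V, (c = a ∨ c = b) →
        ∃ z, z ∈ (A \ S).filter (fun y => ReachIn H (A \ S) c y) ∧ SimplicialOn H A z := by
      intro c hcab
      set Cc := (A \ S).filter (fun y => ReachIn H (A \ S) c y) with hCcdef
      have hcAS : c ∈ A \ S := by rcases hcab with rfl | rfl <;> assumption
      have hcCc : c ∈ Cc := Finset.mem_filter.2 ⟨hcAS, ReachIn.refl hcAS⟩
      have hCcAS : ∀ y ∈ Cc, y ∈ A \ S := fun y hy => Finset.mem_of_mem_filter y hy
      have hCcClosed : ∀ z ∈ Cc, ∀ u ∈ A, H.Adj z u → u ∈ Cc ∪ S := by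
        intro z hz u hu hadj
        by_cases huS : u ∈ S
        · exact Finset.mem_union_right _ huS
        · refine Finset.mem_union_left _ (Finset.mem_filter.2 ⟨Finset.mem_sdiff.2 ⟨hu, huS⟩, ?_⟩)
          exact ((Finset.mem_filter.1 hz).2).trans
            (ReachIn.adj hadj (hCcAS z hz) (Finset.mem_sdiff.2 ⟨hu, huS⟩))
      set Ac := Cc ∪ S with hAcdef
      have hAcA : Ac ⊆ A := by
        intro y hy
        rcases Finset.mem_union.1 hy with hy | hy
        · exact (Finset.mem_sdiff.1 (hCcAS y hy)).1
        · exact hSsub hy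
      have hmissing : ∃ e, e ∈ A ∧ e ∉ Ac := by
        rcases hcab with rfl | rfl
        · refine ⟨b, hb, fun hmem => ?_⟩
          rcases Finset.mem_union.1 hmem with hmem | hmem
          · exact hsep (Finset.mem_filter.1 hmem).2
          · exact hbS hmem
        · refine ⟨a, ha, fun hmem => ?_⟩
          rcases Finset.mem_union.1 hmem with hmem | hmem
          · exact hsep ((Finset.mem_filter.1 hmem).2).symm
          · exact haS hmem
      have hAcN : Ac.card ≤ N := by
        obtain ⟨e, heA, heAc⟩ := hmissing
        have : Ac ⊂ A := Finset.ssubset_iff_of_subset hAcA |>.2 ⟨e, heA, heAc⟩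
        have := Finset.card_lt_card this
        omega
      have hlift : ∀ z, SimplicialOn H Ac z → z ∈ Cc → SimplicialOn H A z := by
        intro z hz hzC
        refine ⟨hAcA hz.1, fun u hu v hv hzu hzv huv => ?_⟩
        exact hz.2 u (hCcClosed z hzC u hu hzu) v (hCcClosed z hzC v hv hzv) hzu hzv huv
      by_cases hcomp : ∀ u ∈ Ac, ∀ v ∈ Ac, u ≠ v → H.Adj u v
      · exact ⟨c, hcCc, hlift c ⟨Finset.mem_union_left _ hcCc,
          fun u hu v hv _ _ huv => hcomp u hu v hv huv⟩ hcCc⟩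
      · push_neg at hcomp
        obtain ⟨a', ha', b', hb', hne', hnadj'⟩ := hcomp
        obtain ⟨z₁, z₂, hz₁, hz₂, hz12, hznadj⟩ :=
          ih Ac hAcN (ChordalOn.mono hAcA hc) a' ha' b' hb' hne' hnadj'
        have hzS : z₁ ∉ S ∨ z₂ ∉ S := by
          by_contra hcon
          push_neg at hcon
          exact hznadj (hclique z₁ hcon.1 z₂ hcon.2 hz12)
        rcases hzS with h | h
        · have hzC : z₁ ∈ Cc := by
            rcases Finset.mem_union.1 hz₁.1 with hh | hh
            · exact hh
            · exact absurd hh h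
          exact ⟨z₁, hzC, hlift z₁ hz₁ hzC⟩
        · have hzC : z₂ ∈ Cc := by
            rcases Finset.mem_union.1 hz₂.1 with hh | hh
            · exact hh
            · exact absurd hh h
          exact ⟨z₂, hzC, hlift z₂ hz₂ hzC⟩
    obtain ⟨za, hzaC, hzaS⟩ := getZ a (Or.inl rfl)
    obtain ⟨zb, hzbC, hzbS⟩ := getZ b (Or.inr rfl)
    have h1 : ReachIn H (A \ S) a za := (Finset.mem_filter.1 hzaC).2
    have h2 : ReachIn H (A \ S) b zb := (Finset.mem_filter.1 hzbC).2
    refine ⟨za, zb, hzaS, hzbS, ?_, ?_⟩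
    · intro h
      exact hsep (h1.trans (h ▸ h2).symm)
    · intro hadj
      exact hsep ((h1.trans (ReachIn.adj hadj h1.mem_right h2.mem_right)).trans h2.symm)

theorem dirac (H : SimpleGraph V) (A : Finset V) (hc : ChordalOn H A) (hne : A.Nonempty) :
    ∃ z, SimplicialOn H A z := by
  classical
  by_cases hcomp : ∀ u ∈ A, ∀ v ∈ A, u ≠ v → H.Adj u v
  · obtain ⟨z, hz⟩ := hne
    exact ⟨z, hz, fun u hu v hv _ _ huv => hcomp u hu v hv huv⟩
  · push_neg at hcomp
    obtain ⟨a, ha, b, hb, hab, hnadj⟩ := hcomp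
    obtain ⟨z, _, hz, _⟩ := dirac_pair H A.card A le_rfl hc a ha b hb hab hnadj
    exact ⟨z, hz⟩

lemma mem_delClosedNbhd {A : Finset V} {x y : V} :
    y ∈ delClosedNbhd H A x ↔ y ∈ A ∧ y ≠ x ∧ ¬H.Adj x y := by
  classical
  simp [delClosedNbhd]

lemma delClosedNbhd_subset_erase {A : Finset V} {x : V} :
    delClosedNbhd H A x ⊆ A.erase x := by
  intro y hy
  rw [mem_delClosedNbhd] at hy
  exact Finset.mem_erase.2 ⟨hy.2.1, hy.1⟩

theorem vd_insert_isolated {A : Finset V} (h : VertexDecomposableOn H A) :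
    ∀ z ∉ A, (∀ u ∈ A, ¬H.Adj z u) → VertexDecomposableOn H (insert z A) := by
  induction h with
  | edgeless A h0 =>
    intro z hz hiso
    refine VertexDecomposableOn.edgeless _ ?_
    intro u hu v hv hadj
    rcases Finset.mem_insert.1 hu with hu' | hu' <;> rcases Finset.mem_insert.1 hv with hv' | hv'
    · rw [hu', hv'] at hadj; exact H.irrefl hadj
    · rw [hu'] at hadj; exact hiso v hv' hadj
    · rw [hv'] at hadj; exact hiso u hu' hadj.symm
    · exact h0 u hu' v hv' hadj
  | shed A x hx hlink hdel hexch ihlink ihdel =>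
    intro z hz hiso
    have hzx : z ≠ x := fun h => hz (h ▸ hx)
    have hdelsub : delClosedNbhd H A x ⊆ A := fun y hy => (mem_delClosedNbhd.1 hy).1
    have heq1 : delClosedNbhd H (insert z A) x = insert z (delClosedNbhd H A x) := by
      ext y
      rw [mem_delClosedNbhd, Finset.mem_insert, Finset.mem_insert, mem_delClosedNbhd]
      constructor
      · rintro ⟨(rfl | hy), h2⟩
        · exact Or.inl rfl
        · exact Or.inr ⟨hy, h2⟩
      · rintro (rfl | ⟨hy, h2⟩)
        · exact ⟨Or.inl rfl, hzx, fun h => hiso x hx h.symm⟩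
        · exact ⟨Or.inr hy, h2⟩
    have heq2 : (insert z A).erase x = insert z (A.erase x) :=
      Finset.erase_insert_of_ne hzx
    refine VertexDecomposableOn.shed _ x (Finset.mem_insert_of_mem hx) ?_ ?_ ?_
    · rw [heq1]
      exact ihlink z (fun h => hz (hdelsub h)) (fun u hu => hiso u (hdelsub hu))
    · rw [heq2]
      exact ihdel z (fun h => hz (Finset.mem_of_mem_erase h))
        (fun u hu => hiso u (Finset.mem_of_mem_erase hu))
    · intro S hS
      have hSsub : ∀ w ∈ S, w = z ∨ w ∈ delClosedNbhd H A x := by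
        intro w hw
        have := hS.1 hw
        rw [heq1, Finset.mem_insert] at this
        exact this
      have hS' : IsIndepIn H (delClosedNbhd H A x) (S.erase z) := by
        constructor
        · intro u hu
          rcases hSsub u (Finset.mem_of_mem_erase hu) with rfl | h
          · exact absurd rfl (Finset.ne_of_mem_erase hu)
          · exact h
        · intro u hu v hv
          exact hS.2 u (Finset.mem_of_mem_erase hu) v (Finset.mem_of_mem_erase hv)
      obtain ⟨y, hyA, hyadj, hyind⟩ := hexch _ hS'
      have hyAx : y ∈ A.erase x := hyind.1 (Finset.mem_insert_self _ _)
      have hynadj : ∀ w ∈ S, ¬H.Adj y w := by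
        intro w hw
        rcases hSsub w hw with rfl | hwd
        · exact fun h => hiso y (Finset.mem_of_mem_erase hyAx) h.symm
        · by_cases hwz : w = z
          · exact fun h => hiso y (Finset.mem_of_mem_erase hyAx) (hwz ▸ h).symm
          · exact hyind.2 y (Finset.mem_insert_self _ _) w
              (Finset.mem_insert_of_mem (Finset.mem_erase.2 ⟨hwz, hw⟩))
      refine ⟨y, Finset.mem_insert_of_mem hyA, hyadj, ?_, ?_⟩
      · intro w hw
        rw [heq2, Finset.mem_insert]
        rcases Finset.mem_insert.1 hw with rfl | hw
        · exact Or.inr hyAx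
        · rcases hSsub w hw with rfl | h
          · exact Or.inl rfl
          · exact Or.inr (delClosedNbhd_subset_erase h)
      · intro u hu v hv hadj
        rcases Finset.mem_insert.1 hu with hu' | hu' <;> rcases Finset.mem_insert.1 hv with hv' | hv'
        · rw [hu', hv'] at hadj; exact H.irrefl hadj
        · rw [hu'] at hadj; exact hynadj v hv' hadj
        · rw [hv'] at hadj; exact hynadj u hu' hadj.symm
        · exact hS.2 u hu' v hv' hadj

theorem vd_of_chordalOn (H : SimpleGraph V) : ∀ (N : ℕ) (A : Finset V), A.card ≤ N →
    ChordalOn H A → VertexDecomposableOn H A := by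
  intro N
  induction N with
  | zero =>
    intro A hA _
    rw [Nat.le_zero, Finset.card_eq_zero] at hA
    subst hA
    exact .edgeless _ (by simp)
  | succ N ih =>
    intro A hA hc
    classical
    by_cases hedge : ∀ u ∈ A, ∀ v ∈ A, ¬H.Adj u v
    · exact .edgeless _ hedge
    push_neg at hedge
    obtain ⟨u₀, hu₀, v₀, hv₀, hadj₀⟩ := hedge
    obtain ⟨z, hzA, hzsimp⟩ := dirac H A hc ⟨u₀, hu₀⟩
    by_cases hnbrz : ∃ x ∈ A, H.Adj z x
    · obtain ⟨x, hxA, hzx⟩ := hnbrz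
      have hcard : ∀ A' : Finset V, A' ⊆ A.erase x → A'.card ≤ N := by
        intro A' hsub
        have h1 := Finset.card_le_card hsub
        have h2 := Finset.card_erase_lt_of_mem hxA
        omega
      refine .shed A x hxA ?_ ?_ ?_
      · exact ih _ (hcard _ delClosedNbhd_subset_erase)
          (ChordalOn.mono (delClosedNbhd_subset_erase.trans (Finset.erase_subset _ _)) hc)
      · exact ih _ (hcard _ (Finset.Subset.refl _)) (ChordalOn.mono (Finset.erase_subset _ _) hc)
      · intro S hS
        have key : ∀ w ∈ S, ¬H.Adj z w := by
          intro w hw hzw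
          have hwd := hS.1 hw
          rw [mem_delClosedNbhd] at hwd
          exact hwd.2.2 (hzsimp x hxA w hwd.1 hzx hzw (Ne.symm hwd.2.1))
        refine ⟨z, hzA, hzx.symm, ?_, ?_⟩
        · intro w hw
          rcases Finset.mem_insert.1 hw with rfl | hw
          · exact Finset.mem_erase.2 ⟨hzx.ne, hzA⟩
          · exact delClosedNbhd_subset_erase (hS.1 hw)
        · intro u hu v hv hadj
          rcases Finset.mem_insert.1 hu with hu' | hu' <;> rcases Finset.mem_insert.1 hv with hv' | hv'
          · rw [hu', hv'] at hadj; exact H.irrefl hadj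
          · rw [hu'] at hadj; exact key v hv' hadj
          · rw [hv'] at hadj; exact key u hu' hadj.symm
          · exact hS.2 u hu' v hv' hadj
    · push_neg at hnbrz
      have hvd : VertexDecomposableOn H (A.erase z) := by
        refine ih _ ?_ (ChordalOn.mono (Finset.erase_subset _ _) hc)
        have := Finset.card_erase_lt_of_mem hzA
        omega
      have := vd_insert_isolated hvd z (Finset.notMem_erase z A)
        (fun u hu => hnbrz u (Finset.mem_of_mem_erase hu))
      rwa [Finset.insert_erase hzA] at this



theorem vd_union_edgeless {A₁ : Finset V} (h₁ : VertexDecomposableOn H A₁) :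
    ∀ A₂ : Finset V, (∀ u ∈ A₂, ∀ v ∈ A₂, ¬H.Adj u v) → Disjoint A₁ A₂ →
      (∀ u ∈ A₁, ∀ v ∈ A₂, ¬H.Adj u v) → VertexDecomposableOn H (A₁ ∪ A₂) := by
  induction h₁ with
  | edgeless A h0 =>
    intro A₂ h2 hdisj hcross
    refine .edgeless _ ?_
    intro u hu v hv hadj
    rcases Finset.mem_union.1 hu with hu' | hu' <;> rcases Finset.mem_union.1 hv with hv' | hv'
    · exact h0 u hu' v hv' hadj
    · exact hcross u hu' v hv' hadj
    · exact hcross v hv' u hu' hadj.symm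
    · exact h2 u hu' v hv' hadj
  | shed A x hx hlink hdel hexch ihlink ihdel =>
    intro A₂ h2 hdisj hcross
    have hdelsub : delClosedNbhd H A x ⊆ A := fun y hy => (mem_delClosedNbhd.1 hy).1
    have hxA2 : x ∉ A₂ := fun h => (Finset.disjoint_left.1 hdisj) hx h
    have heq1 : delClosedNbhd H (A ∪ A₂) x = delClosedNbhd H A x ∪ A₂ := by
      ext y
      rw [mem_delClosedNbhd, Finset.mem_union, Finset.mem_union, mem_delClosedNbhd]
      constructor
      · rintro ⟨hy | hy, h2'⟩
        · exact Or.inl ⟨hy, h2'⟩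
        · exact Or.inr hy
      · rintro (⟨hy, h2'⟩ | hy)
        · exact ⟨Or.inl hy, h2'⟩
        · exact ⟨Or.inr hy, fun h => hxA2 (h ▸ hy), fun h => hcross x hx y hy h⟩
    have heq2 : (A ∪ A₂).erase x = A.erase x ∪ A₂ := by
      ext y
      rw [Finset.mem_erase, Finset.mem_union, Finset.mem_union, Finset.mem_erase]
      constructor
      · rintro ⟨hne, hy | hy⟩
        · exact Or.inl ⟨hne, hy⟩
        · exact Or.inr hy
      · rintro (⟨hne, hy⟩ | hy)
        · exact ⟨hne, Or.inl hy⟩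
        · exact ⟨fun h => hxA2 (h ▸ hy), Or.inr hy⟩
    refine .shed _ x (Finset.mem_union_left _ hx) ?_ ?_ ?_
    · rw [heq1]
      exact ihlink A₂ h2 (Finset.disjoint_of_subset_left hdelsub hdisj)
        (fun u hu v hv => hcross u (hdelsub hu) v hv)
    · rw [heq2]
      exact ihdel A₂ h2 (Finset.disjoint_of_subset_left (Finset.erase_subset _ _) hdisj)
        (fun u hu v hv => hcross u (Finset.mem_of_mem_erase hu) v hv)
    · intro S hS
      rw [heq1] at hS
      have hS₁ : IsIndepIn H (delClosedNbhd H A x) (S ∩ delClosedNbhd H A x) :=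
        ⟨Finset.inter_subset_right, fun u hu v hv =>
          hS.2 u (Finset.mem_of_mem_inter_left hu) v (Finset.mem_of_mem_inter_left hv)⟩
      obtain ⟨y, hyA, hyadj, hyind⟩ := hexch _ hS₁
      have hyAx : y ∈ A.erase x := hyind.1 (Finset.mem_insert_self _ _)
      have hynadj : ∀ w ∈ S, ¬H.Adj y w := by
        intro w hw hadj
        rcases Finset.mem_union.1 (hS.1 hw) with h | h
        · exact (hyind.2 y (Finset.mem_insert_self _ _) w
            (Finset.mem_insert_of_mem (Finset.mem_inter.2 ⟨hw, h⟩))) hadj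
        · exact hcross y (Finset.mem_of_mem_erase hyAx) w h hadj
      refine ⟨y, Finset.mem_union_left _ hyA, hyadj, ?_, ?_⟩
      · intro w hw
        rw [heq2, Finset.mem_union]
        rcases Finset.mem_insert.1 hw with hw' | hw'
        · exact Or.inl (hw' ▸ hyAx)
        · rcases Finset.mem_union.1 (hS.1 hw') with h | h
          · exact Or.inl (delClosedNbhd_subset_erase h)
          · exact Or.inr h
      · intro u hu v hv hadj
        rcases Finset.mem_insert.1 hu with hu' | hu' <;> rcases Finset.mem_insert.1 hv with hv' | hv'
        · rw [hu', hv'] at hadj; exact H.irrefl hadj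
        · rw [hu'] at hadj; exact hynadj v hv' hadj
        · rw [hv'] at hadj; exact hynadj u hu' hadj.symm
        · exact hS.2 u hu' v hv' hadj

theorem vd_union {A₂ : Finset V} (h₂ : VertexDecomposableOn H A₂) :
    ∀ A₁ : Finset V, VertexDecomposableOn H A₁ → Disjoint A₁ A₂ →
      (∀ u ∈ A₁, ∀ v ∈ A₂, ¬H.Adj u v) → VertexDecomposableOn H (A₁ ∪ A₂) := by
  induction h₂ with
  | edgeless A h2 =>
    intro A₁ h₁ hdisj hcross
    exact vd_union_edgeless h₁ A h2 hdisj hcross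
  | shed A x hx hlink hdel hexch ihlink ihdel =>
    intro A₁ h₁ hdisj hcross
    have hdelsub : delClosedNbhd H A x ⊆ A := fun y hy => (mem_delClosedNbhd.1 hy).1
    have hxA1 : x ∉ A₁ := fun h => (Finset.disjoint_right.1 hdisj) hx h
    have heq1 : delClosedNbhd H (A₁ ∪ A) x = A₁ ∪ delClosedNbhd H A x := by
      ext y
      rw [mem_delClosedNbhd, Finset.mem_union, Finset.mem_union, mem_delClosedNbhd]
      constructor
      · rintro ⟨hy | hy, h2'⟩
        · exact Or.inl hy
        · exact Or.inr ⟨hy, h2'⟩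
      · rintro (hy | ⟨hy, h2'⟩)
        · exact ⟨Or.inl hy, fun h => hxA1 (h ▸ hy), fun h => hcross y hy x hx h.symm⟩
        · exact ⟨Or.inr hy, h2'⟩
    have heq2 : (A₁ ∪ A).erase x = A₁ ∪ A.erase x := by
      ext y
      rw [Finset.mem_erase, Finset.mem_union, Finset.mem_union, Finset.mem_erase]
      constructor
      · rintro ⟨hne, hy | hy⟩
        · exact Or.inl hy
        · exact Or.inr ⟨hne, hy⟩
      · rintro (hy | ⟨hne, hy⟩)
        · exact ⟨fun h => hxA1 (h ▸ hy), Or.inl hy⟩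
        · exact ⟨hne, Or.inr hy⟩
    refine .shed _ x (Finset.mem_union_right _ hx) ?_ ?_ ?_
    · rw [heq1]
      exact ihlink A₁ h₁ (Finset.disjoint_of_subset_right hdelsub hdisj)
        (fun u hu v hv => hcross u hu v (hdelsub hv))
    · rw [heq2]
      exact ihdel A₁ h₁ (Finset.disjoint_of_subset_right (Finset.erase_subset _ _) hdisj)
        (fun u hu v hv => hcross u hu v (Finset.mem_of_mem_erase hv))
    · intro S hS
      rw [heq1] at hS
      have hS₁ : IsIndepIn H (delClosedNbhd H A x) (S ∩ delClosedNbhd H A x) :=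
        ⟨Finset.inter_subset_right, fun u hu v hv =>
          hS.2 u (Finset.mem_of_mem_inter_left hu) v (Finset.mem_of_mem_inter_left hv)⟩
      obtain ⟨y, hyA, hyadj, hyind⟩ := hexch _ hS₁
      have hyAx : y ∈ A.erase x := hyind.1 (Finset.mem_insert_self _ _)
      have hynadj : ∀ w ∈ S, ¬H.Adj y w := by
        intro w hw hadj
        rcases Finset.mem_union.1 (hS.1 hw) with h | h
        · exact hcross w h y (Finset.mem_of_mem_erase hyAx) hadj.symm
        · exact (hyind.2 y (Finset.mem_insert_self _ _) w
            (Finset.mem_insert_of_mem (Finset.mem_inter.2 ⟨hw, h⟩))) hadj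
      refine ⟨y, Finset.mem_union_right _ hyA, hyadj, ?_, ?_⟩
      · intro w hw
        rw [heq2, Finset.mem_union]
        rcases Finset.mem_insert.1 hw with hw' | hw'
        · exact Or.inr (hw' ▸ hyAx)
        · rcases Finset.mem_union.1 (hS.1 hw') with h | h
          · exact Or.inl h
          · exact Or.inr (delClosedNbhd_subset_erase h)
      · intro u hu v hv hadj
        rcases Finset.mem_insert.1 hu with hu' | hu' <;> rcases Finset.mem_insert.1 hv with hv' | hv'
        · rw [hu', hv'] at hadj; exact H.irrefl hadj
        · rw [hu'] at hadj; exact hynadj v hv' hadj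
        · rw [hv'] at hadj; exact hynadj u hu' hadj.symm
        · exact hS.2 u hu' v hv' hadj

theorem vd_biUnion {ι : Type*} [DecidableEq ι] (C : ι → Finset V) :
    ∀ t : Finset ι, (∀ i ∈ t, ∀ j ∈ t, i ≠ j → Disjoint (C i) (C j)) →
      (∀ i ∈ t, ∀ j ∈ t, i ≠ j → ∀ u ∈ C i, ∀ v ∈ C j, ¬H.Adj u v) →
      (∀ i ∈ t, VertexDecomposableOn H (C i)) →
      VertexDecomposableOn H (t.biUnion C) := by
  intro t
  induction t using Finset.induction with
  | empty =>
    intro _ _ _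
    exact .edgeless _ (by simp)
  | @insert a t hat ih =>
    intro hdisj hcross hvd
    rw [Finset.biUnion_insert]
    have hne : ∀ i ∈ t, a ≠ i := fun i hi h => hat (h ▸ hi)
    refine vd_union (ih ?_ ?_ ?_) (C a) (hvd a (Finset.mem_insert_self _ _)) ?_ ?_
    · exact fun i hi j hj hij => hdisj i (Finset.mem_insert_of_mem hi) j
        (Finset.mem_insert_of_mem hj) hij
    · exact fun i hi j hj hij => hcross i (Finset.mem_insert_of_mem hi) j
        (Finset.mem_insert_of_mem hj) hij
    · exact fun i hi => hvd i (Finset.mem_insert_of_mem hi)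
    · rw [Finset.disjoint_biUnion_right]
      exact fun i hi => hdisj a (Finset.mem_insert_self _ _) i
        (Finset.mem_insert_of_mem hi) (hne i hi)
    · intro u hu v hv
      obtain ⟨j, hj, hvj⟩ := Finset.mem_biUnion.1 hv
      exact hcross a (Finset.mem_insert_self _ _) j (Finset.mem_insert_of_mem hj)
        (hne j hj) u hu v hvj

/-- If each `Gs i` is a connected chordal graph with at least two vertices
attached to `G` at a vertex `x i` that is a neighbor of a simplicial vertex of `Gs i`,
then the attachment graph `G(G_1, …, G_n)` is vertex decomposable. -/
theorem stmt_4 {V : Type*} [DecidableEq V] (n : ℕ) (x : Fin n → V) (B : Fin n → Finset V)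
    (G : SimpleGraph V) (Gs : Fin n → SimpleGraph V)
    (hxinj : Function.Injective x)
    (hGsupp : ∀ u v, G.Adj u v → (∃ i, u = x i) ∧ (∃ j, v = x j))
    (hxB : ∀ i, x i ∈ B i)
    (hBcard : ∀ i, 2 ≤ (B i).card)
    (hBdisj : ∀ i j, i ≠ j → Disjoint (B i) (B j))
    (hGssupp : ∀ i, ∀ u v, (Gs i).Adj u v → u ∈ B i ∧ v ∈ B i)
    (hconn : ∀ i, ((Gs i).induce ((B i : Set V))).Connected)
    -- each `Gs i` is chordal
    (hchordal : ∀ i, IsChordal (Gs i))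
    -- `x i` is a neighbor of a simplicial vertex `z` of `Gs i`
    (hsimp : ∀ i, ∃ z ∈ B i,
      (∀ u v, (Gs i).Adj z u → (Gs i).Adj z v → u ≠ v → (Gs i).Adj u v) ∧
      (Gs i).Adj z (x i)) :
    VertexDecomposableOn (G ⊔ ⨆ i, Gs i) (Finset.univ.biUnion B) := by
  classical
  set H := G ⊔ ⨆ i, Gs i with hHdef
  have hadj : ∀ u v, H.Adj u v ↔ G.Adj u v ∨ ∃ j, (Gs j).Adj u v := by
    intro u v
    rw [hHdef]
    simp [SimpleGraph.sup_adj, SimpleGraph.iSup_adj]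
  have hBmem : ∀ {u : V} {i j : Fin n}, u ∈ B i → u ∈ B j → i = j := by
    intro u i j hiu hju
    by_contra hne
    exact Finset.disjoint_left.1 (hBdisj i j hne) hiu hju
  have hxmem : ∀ {p j : Fin n}, x p ∈ B j → p = j := fun {p j} h => hBmem (hxB p) h
  have hedge : ∀ {j : Fin n} {u v : V}, u ∈ B j → H.Adj u v →
      (Gs j).Adj u v ∨ (u = x j ∧ ∃ k, k ≠ j ∧ v = x k ∧ G.Adj u v) := by
    intro j u v hu h
    rcases (hadj u v).1 h with hG | ⟨k, hk⟩
    · obtain ⟨⟨p, hp⟩, ⟨q, hq⟩⟩ := hGsupp _ _ hG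
      have hpj : p = j := hxmem (hp ▸ hu)
      right
      refine ⟨by rw [hp, hpj], q, ?_, hq, hG⟩
      intro hqj
      have huv : u = v := by rw [hp, hq, hpj, hqj]
      rw [huv] at hG
      exact G.irrefl hG
    · have hk1 : u ∈ B k := (hGssupp k _ _ hk).1
      have hkj : k = j := hBmem hk1 hu
      exact Or.inl (hkj ▸ hk)
  have hGsH : ∀ {j : Fin n} {u v : V}, (Gs j).Adj u v → H.Adj u v :=
    fun {j u v} h => (hadj _ _).2 (Or.inr ⟨j, h⟩)
  -- chordality of pieces inside a single B i
  have hchB : ∀ (i : Fin n) (A' : Finset V), A' ⊆ B i → ChordalOn H A' := by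
    intro i A' hsub x₀ w hcyc hlen hsupp
    have hsuppB : ∀ y ∈ w.support, y ∈ B i := fun y hy => hsub (hsupp y hy)
    have hE : ∀ e ∈ w.edges, e ∈ (Gs i).edgeSet := by
      intro e he
      induction e using Sym2.ind with
      | _ p q =>
      have hp : p ∈ w.support := w.fst_mem_support_of_mem_edges he
      have hq : q ∈ w.support := w.snd_mem_support_of_mem_edges he
      have hpq : H.Adj p q := w.edges_subset_edgeSet he
      rcases hedge (hsuppB p hp) hpq with h | ⟨_, k, hki, hqx, _⟩
      · exact h
      · exact absurd (hxmem (hqx ▸ hsuppB q hq)) hki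
    have hcyc' : (w.transfer (Gs i) hE).IsCycle := hcyc.transfer hE
    have hlen' : 4 ≤ (w.transfer (Gs i) hE).length := by
      rw [SimpleGraph.Walk.length_transfer]; exact hlen
    obtain ⟨u, v, hu, hv, huv, hne⟩ := hchordal i x₀ (w.transfer (Gs i) hE) hcyc' hlen'
    rw [SimpleGraph.Walk.support_transfer] at hu hv
    rw [SimpleGraph.Walk.edges_transfer] at hne
    exact ⟨u, v, hu, hv, hGsH huv, hne⟩
  have hvdB : ∀ (i : Fin n) (A' : Finset V), A' ⊆ B i → VertexDecomposableOn H A' :=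
    fun i A' hsub => vd_of_chordalOn H A'.card A' le_rfl (hchB i A' hsub)
  -- main induction over subsets of indices
  have main : ∀ (m : ℕ) (s : Finset (Fin n)), s.card ≤ m →
      VertexDecomposableOn H (s.biUnion B) := by
    intro m
    induction m with
    | zero =>
      intro s hs
      rw [Nat.le_zero, Finset.card_eq_zero] at hs
      subst hs
      exact .edgeless _ (by simp)
    | succ m ih =>
      intro s hs
      rcases Finset.eq_empty_or_nonempty s with rfl | ⟨i, hi⟩
      · exact .edgeless _ (by simp)
      obtain ⟨z, hzB, hzsimp, hzadj⟩ := hsimp i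
      have hzxne : z ≠ x i := fun h => (Gs i).irrefl (h ▸ hzadj)
      have hzH : H.Adj (x i) z := hGsH hzadj.symm
      have hxiA : x i ∈ s.biUnion B := Finset.mem_biUnion.2 ⟨i, hi, hxB i⟩
      -- the deletion
      have herase : (s.biUnion B).erase (x i) =
          ((s.erase i).biUnion B) ∪ ((B i).erase (x i)) := by
        ext y
        rw [Finset.mem_erase, Finset.mem_union, Finset.mem_biUnion, Finset.mem_biUnion,
          Finset.mem_erase]
        constructor
        · rintro ⟨hne, j, hj, hyB⟩
          by_cases hji : j = i
          · exact Or.inr ⟨hne, hji ▸ hyB⟩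
          · exact Or.inl ⟨j, Finset.mem_erase.2 ⟨hji, hj⟩, hyB⟩
        · rintro (⟨j, hj, hyB⟩ | ⟨hne, hyB⟩)
          · obtain ⟨hji, hjs⟩ := Finset.mem_erase.1 hj
            refine ⟨fun h => hji (hxmem (h ▸ hyB)).symm, j, hjs, hyB⟩
          · exact ⟨hne, i, hi, hyB⟩
      have heraseVD : VertexDecomposableOn H ((s.biUnion B).erase (x i)) := by
        rw [herase]
        refine vd_union (hvdB i _ (Finset.erase_subset _ _)) _ (ih (s.erase i) ?_) ?_ ?_
        · have h2 := Finset.card_erase_lt_of_mem hi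
          omega
        · rw [Finset.disjoint_left]
          intro y hy hy'
          obtain ⟨j, hj, hyB⟩ := Finset.mem_biUnion.1 hy
          exact (Finset.mem_erase.1 hj).1 (hBmem hyB (Finset.mem_of_mem_erase hy'))
        · intro u hu v hv hadj'
          obtain ⟨j, hj, huB⟩ := Finset.mem_biUnion.1 hu
          have hji : j ≠ i := (Finset.mem_erase.1 hj).1
          obtain ⟨hvne, hvB⟩ := Finset.mem_erase.1 hv
          rcases hedge huB hadj' with hGs | ⟨hux, k, hkj, hvx, hG⟩
          · exact hji (hBmem ((hGssupp j _ _ hGs).2) hvB)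
          · exact hvne (hvx.trans (congrArg x (hxmem (hvx ▸ hvB))))
      -- the link
      set s' := s.filter (fun j => j ≠ i ∧ ¬G.Adj (x i) (x j)) with hs'def
      have hs'sub : s' ⊆ s.erase i := by
        intro j hj
        obtain ⟨hjs, hji, hjn⟩ := Finset.mem_filter.1 hj
        exact Finset.mem_erase.2 ⟨hji, hjs⟩
      set Dfun : Fin n → Finset V :=
        (fun j => (B j).filter (fun y => y ≠ x i ∧ ¬H.Adj (x i) y)) with hDdef
      have hmemD : ∀ {j : Fin n} {y : V},
          y ∈ Dfun j ↔ y ∈ B j ∧ y ≠ x i ∧ ¬H.Adj (x i) y := by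
        intro j y
        simp only [hDdef, Finset.mem_filter]
      have hDsub : ∀ j, Dfun j ⊆ B j := fun j y hy => (hmemD.1 hy).1
      have hBfree : ∀ j ∈ s', ∀ y ∈ B j, y ≠ x i ∧ ¬H.Adj (x i) y := by
        intro j hj y hy
        obtain ⟨hjs, hji, hjn⟩ := Finset.mem_filter.1 hj
        refine ⟨fun h => hji (hxmem (h ▸ hy)).symm, fun hAdj => ?_⟩
        rcases hedge (hxB i) hAdj with hGs | ⟨_, k, hki, hyx, hG⟩
        · exact hji (hBmem ((hGssupp i _ _ hGs).2) hy).symm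
        · have hkj : k = j := hxmem (hyx ▸ hy)
          rw [hyx, hkj] at hG
          exact hjn hG
      have hxnotD : ∀ k ∈ s, k ∉ s' → x k ∉ Dfun k := by
        intro k hks hks' hmem
        obtain ⟨_, hne, hnadj⟩ := hmemD.1 hmem
        by_cases hki : k = i
        · exact hne (by rw [hki])
        · have hG : G.Adj (x i) (x k) := by
            by_contra hG
            exact hks' (Finset.mem_filter.2 ⟨hks, hki, hG⟩)
          exact hnadj ((hadj _ _).2 (Or.inl hG))
      have hlinkeq : delClosedNbhd H (s.biUnion B) (x i) =
          (s'.biUnion B) ∪ ((s \ s').biUnion Dfun) := by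
        ext y
        rw [mem_delClosedNbhd, Finset.mem_union, Finset.mem_biUnion, Finset.mem_biUnion,
          Finset.mem_biUnion]
        constructor
        · rintro ⟨⟨j, hj, hyB⟩, hP⟩
          by_cases hjs' : j ∈ s'
          · exact Or.inl ⟨j, hjs', hyB⟩
          · exact Or.inr ⟨j, Finset.mem_sdiff.2 ⟨hj, hjs'⟩, hmemD.2 ⟨hyB, hP⟩⟩
        · rintro (⟨j, hj, hyB⟩ | ⟨j, hj, hyD⟩)
          · exact ⟨⟨j, (Finset.mem_filter.1 hj).1, hyB⟩, hBfree j hj y hyB⟩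
          · obtain ⟨hyB, hP⟩ := hmemD.1 hyD
            exact ⟨⟨j, (Finset.mem_sdiff.1 hj).1, hyB⟩, hP⟩
      have hlinkVD : VertexDecomposableOn H (delClosedNbhd H (s.biUnion B) (x i)) := by
        rw [hlinkeq]
        refine vd_union ?_ _ (ih s' ?_) ?_ ?_
        · refine vd_biUnion Dfun (s \ s') ?_ ?_ ?_
          · intro j hj k hk hjk
            exact Disjoint.mono (hDsub j) (hDsub k) (hBdisj j k hjk)
          · intro j hj k hk hjk u hu v hv hadj'
            obtain ⟨huB, hu2⟩ := hmemD.1 hu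
            obtain ⟨hvB, hv2⟩ := hmemD.1 hv
            rcases hedge huB hadj' with hGs | ⟨hux, k', hk', hvx, hG⟩
            · exact hjk (hBmem ((hGssupp j _ _ hGs).2) hvB)
            · have hjs := Finset.mem_sdiff.1 hj
              exact hxnotD j hjs.1 hjs.2 (hux ▸ hu)
          · intro j hj
            exact hvdB j _ (hDsub j)
        · have h1 := Finset.card_le_card hs'sub
          have h2 := Finset.card_erase_lt_of_mem hi
          omega
        · rw [Finset.disjoint_left]
          intro y hy hy'
          obtain ⟨j, hj, hyB⟩ := Finset.mem_biUnion.1 hy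
          obtain ⟨k, hk, hyD⟩ := Finset.mem_biUnion.1 hy'
          have hjeq : j = k := hBmem hyB (hDsub k hyD)
          exact (Finset.mem_sdiff.1 hk).2 (hjeq ▸ hj)
        · intro u hu v hv hadj'
          obtain ⟨j, hj, huB⟩ := Finset.mem_biUnion.1 hu
          obtain ⟨k, hk, hvD⟩ := Finset.mem_biUnion.1 hv
          have hvB := hDsub k hvD
          rcases hedge huB hadj' with hGs | ⟨hux, k', hk', hvx, hG⟩
          · have hjeq : j = k := hBmem ((hGssupp j _ _ hGs).2) hvB
            exact (Finset.mem_sdiff.1 hk).2 (hjeq ▸ hj)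
          · have hks := Finset.mem_sdiff.1 hk
            have hkeq : k' = k := hxmem (hvx ▸ hvB)
            have : x k ∈ Dfun k := by rw [hkeq] at hvx; rw [← hvx]; exact hvD
            exact hxnotD k hks.1 hks.2 this
      -- the exchange property
      have hexchP : ∀ S, IsIndepIn H (delClosedNbhd H (s.biUnion B) (x i)) S →
          ∃ y ∈ s.biUnion B, H.Adj (x i) y ∧
            IsIndepIn H ((s.biUnion B).erase (x i)) (insert y S) := by
        intro S hS
        have hzdel : z ∈ (s.biUnion B).erase (x i) :=
          Finset.mem_erase.2 ⟨hzxne, Finset.mem_biUnion.2 ⟨i, hi, hzB⟩⟩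
        have key : ∀ w ∈ S, ¬H.Adj z w := by
          intro w hw hzw
          have hwdel := hS.1 hw
          rw [mem_delClosedNbhd] at hwdel
          obtain ⟨hwA, hwne, hwnadj⟩ := hwdel
          rcases hedge hzB hzw with hGs | ⟨hzx, _⟩
          · exact hwnadj (hGsH (hzsimp (x i) w hzadj hGs (Ne.symm hwne)))
          · exact hzxne hzx
        refine ⟨z, Finset.mem_biUnion.2 ⟨i, hi, hzB⟩, hzH, ?_, ?_⟩
        · intro w hw
          rcases Finset.mem_insert.1 hw with hw' | hw'
          · exact hw' ▸ hzdel
          · exact delClosedNbhd_subset_erase (hS.1 hw')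
        · intro u hu v hv hadj'
          rcases Finset.mem_insert.1 hu with hu' | hu' <;>
            rcases Finset.mem_insert.1 hv with hv' | hv'
          · rw [hu', hv'] at hadj'; exact H.irrefl hadj'
          · rw [hu'] at hadj'; exact key v hv' hadj'
          · rw [hv'] at hadj'; exact key u hu' hadj'.symm
          · exact hS.2 u hu' v hv' hadj'
      exact .shed _ (x i) hxiA hlinkVD heraseVD hexchP
  exact main Finset.univ.card Finset.univ le_rfl
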